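/- arXiv:1402.5172 — 2 statements merged into one kernel-verified Lean document; each statement's English description precedes it below -/
import Mathlib

section
/- Idempotent law for guarded composition of full Kraus families: if all n guarded families are the same full family {E_δ : δ∈Δ} on H (∑_δ E_δ†E_δ = I_H), and ρ is any density operator on H_C, then for every density operator σ on H: tr_{H_C}( ∑_{(δ_1,...,δ_n)} F(δ_1,...,δ_n)(σ⊗ρ)F(δ_1,...,δ_n)† ) = ∑_{δ∈Δ} E_δ σ E_δ†. -/
noncomputable section
open scoped InnerProductSpace
open Finset

/-- Coordinate model of the tensor product `H_C ⊗ H` along a fixed orthonormal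
basis of the `n`-dimensional coin space `H_C`. -/
abbrev TensorSp (n : ℕ) (H : Type*) [NormedAddCommGroup H] [InnerProductSpace ℂ H] : Type _ :=
  PiLp 2 (fun _ : Fin n => H)

variable {n : ℕ} {H : Type*} [NormedAddCommGroup H] [InnerProductSpace ℂ H]

/-- the pure tensor `c ⊗ ψ`. -/
def pureTensor (c : EuclideanSpace ℂ (Fin n)) (ψ : H) : TensorSp n H :=
  WithLp.toLp 2 (fun i => c i • ψ)

/-- the block-diagonal operator `∑ᵢ |i⟩⟨i| ⊗ Uᵢ`, i.e. the guarded composition of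
the `Uᵢ` along the computational basis of the coin space. -/
def blockDiag (U : Fin n → (H →ₗ[ℂ] H)) : TensorSp n H →ₗ[ℂ] TensorSp n H where
  toFun x := WithLp.toLp 2 (fun i => U i (x i))
  map_add' x y := by ext i; simp [map_add]
  map_smul' c x := by ext i; simp [map_smul]

/-- `A ⊗ B` in the coordinate model, `A` acting on the coin space. -/
def tensorOp (A : EuclideanSpace ℂ (Fin n) →ₗ[ℂ] EuclideanSpace ℂ (Fin n))
    (B : H →ₗ[ℂ] H) : TensorSp n H →ₗ[ℂ] TensorSp n H where
  toFun x := WithLp.toLp 2 (fun i => ∑ b : Fin n, A (EuclideanSpace.single b 1) i • B (x b))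
  map_add' x y := by
    ext i; simp [map_add, smul_add, Finset.sum_add_distrib]
  map_smul' c x := by
    ext i; simp [map_smul, Finset.smul_sum, smul_comm c]

/-- `A ⊗ I_H`. -/
def tensorLeft (A : EuclideanSpace ℂ (Fin n) →ₗ[ℂ] EuclideanSpace ℂ (Fin n)) :
    TensorSp n H →ₗ[ℂ] TensorSp n H :=
  tensorOp A LinearMap.id

/-- A linear operator is unitary iff it preserves inner products and is bijective. -/
def IsUnitaryOp {E : Type*} [NormedAddCommGroup E] [InnerProductSpace ℂ E]
    (A : E →ₗ[ℂ] E) : Prop :=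
  (∀ x y : E, ⟪A x, A y⟫_ℂ = ⟪x, y⟫_ℂ) ∧ Function.Bijective A

/-- Positive (semidefinite) operator. -/
def IsPosOp {E : Type*} [NormedAddCommGroup E] [InnerProductSpace ℂ E]
    (A : E →ₗ[ℂ] E) : Prop :=
  ∀ x : E, (⟪x, A x⟫_ℂ).im = 0 ∧ 0 ≤ (⟪x, A x⟫_ℂ).re

/-- Löwner order `A ⊑ B`. -/
def Loewner {E : Type*} [NormedAddCommGroup E] [InnerProductSpace ℂ E]
    (A B : E →ₗ[ℂ] E) : Prop :=
  IsPosOp (B - A)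

section guarded
variable [FiniteDimensional ℂ H] {Δ : Fin n → Type*} [∀ k, Fintype (Δ k)]

/-- the coefficients `λ_{kδ}`. -/
def lam (F : ∀ k, Δ k → (H →ₗ[ℂ] H)) (k : Fin n) (δ : Δ k) : ℝ :=
  Real.sqrt ((LinearMap.trace ℂ H (LinearMap.adjoint (F k δ) ∘ₗ F k δ)).re /
    ∑ τ : Δ k, (LinearMap.trace ℂ H (LinearMap.adjoint (F k τ) ∘ₗ F k τ)).re)

/-- the guarded composition `□ᵢ |i⟩ → Fᵢ` of operator-valued functions, evaluated at
`⊕ᵢ δᵢ`. -/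
def guardedComp (F : ∀ k, Δ k → (H →ₗ[ℂ] H)) (δ : ∀ k, Δ k) :
    TensorSp n H →ₗ[ℂ] TensorSp n H where
  toFun x := WithLp.toLp 2 (fun i => (∏ k ∈ Finset.univ.erase i, lam F k (δ k)) • F i (δ i) (x i))
  map_add' x y := by ext i; simp [map_add, smul_add]
  map_smul' c x := by
    ext i; simp [map_smul, smul_comm c]

end guarded

/-- partial trace over the coin space of an operator on `H_C ⊗ H`. -/
def coinProj (i : Fin n) : TensorSp n H →ₗ[ℂ] H where
  toFun x := x i
  map_add' _ _ := rfl
  map_smul' _ _ := rfl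

def coinIncl (i : Fin n) : H →ₗ[ℂ] TensorSp n H where
  toFun ψ := WithLp.toLp 2 (Pi.single i ψ)
  map_add' x y := by ext j; by_cases h : j = i <;> simp [h]
  map_smul' c x := by ext j; by_cases h : j = i <;> simp [h]

def trCoin (A : TensorSp n H →ₗ[ℂ] TensorSp n H) : H →ₗ[ℂ] H :=
  ∑ i : Fin n, coinProj i ∘ₗ A ∘ₗ coinIncl i

/-- the outer product `|x⟩⟨y|`. -/
def outer {E : Type*} [NormedAddCommGroup E] [InnerProductSpace ℂ E]
    (x y : E) : E →ₗ[ℂ] E :=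
  ((innerSL ℂ y).toLinearMap).smulRight x


/-! ### Auxiliary lemmas -/

section aux

lemma key_sum {n : ℕ} {Δ₀ : Type*} [Fintype Δ₀] {M : Type*} [AddCommMonoid M] [Module ℝ M]
    (w : Δ₀ → ℝ) (hw : ∑ τ, w τ = 1) (i : Fin n) (A : Δ₀ → M) :
    ∑ δ : Fin n → Δ₀, (∏ k ∈ univ.erase i, w (δ k)) • A (δ i) = ∑ d : Δ₀, A d := by
  rw [← Equiv.sum_comp (Equiv.piSplitAt i (fun _ => Δ₀)).symm
      (fun δ => (∏ k ∈ univ.erase i, w (δ k)) • A (δ i)), Fintype.sum_prod_type]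
  refine Finset.sum_congr rfl fun d _ => ?_
  have h1 : ∀ (r : ∀ _ : {j // j ≠ i}, Δ₀),
      ((Equiv.piSplitAt i (fun _ => Δ₀)).symm (d, r)) i = d := by
    intro r; simp [Equiv.piSplitAt]
  have h2 : ∀ (r : ∀ _ : {j // j ≠ i}, Δ₀),
      ∏ k ∈ univ.erase i, w (((Equiv.piSplitAt i (fun _ => Δ₀)).symm (d, r)) k)
        = ∏ k : {j // j ≠ i}, w (r k) := by
    intro r
    rw [Finset.prod_subtype (univ.erase i) (p := fun k => k ≠ i)
      (fun k => by simp [Finset.mem_erase])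
      (fun k => w (((Equiv.piSplitAt i (fun _ => Δ₀)).symm (d, r)) k))]
    exact Finset.prod_congr rfl fun k _ => by simp [Equiv.piSplitAt, k.2]
  simp_rw [h1, h2, ← Finset.sum_smul]
  have : ∑ r : (∀ _ : {j // j ≠ i}, Δ₀), ∏ k : {j // j ≠ i}, w (r k) = 1 := by
    rw [← Fintype.prod_sum (fun (_ : {j // j ≠ i}) (τ : Δ₀) => w τ)]
    simp [hw]
  rw [this, one_smul]

lemma trace_eq_sum_inner' {H : Type*} [NormedAddCommGroup H] [InnerProductSpace ℂ H]
    [FiniteDimensional ℂ H] (A : H →ₗ[ℂ] H)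
    (b : OrthonormalBasis (Fin (Module.finrank ℂ H)) ℂ H) :
    LinearMap.trace ℂ H A = ∑ i, ⟪b i, A (b i)⟫_ℂ := by
  rw [LinearMap.trace_eq_matrix_trace ℂ b.toBasis, Matrix.trace]
  congr 1; ext i
  rw [Matrix.diag_apply, LinearMap.toMatrix_apply, OrthonormalBasis.coe_toBasis_repr_apply,
    OrthonormalBasis.repr_apply_apply, OrthonormalBasis.coe_toBasis]

/-- the adjoint of a guarded composition, applied pointwise. -/
lemma guardedComp_adjoint_apply {n : ℕ} {H : Type*} [NormedAddCommGroup H]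
    [InnerProductSpace ℂ H] [FiniteDimensional ℂ H] {Δ : Fin n → Type*} [∀ k, Fintype (Δ k)]
    (F : ∀ k, Δ k → (H →ₗ[ℂ] H)) (δ : ∀ k, Δ k) (x : TensorSp n H) (i : Fin n) :
    LinearMap.adjoint (guardedComp F δ) x i
      = (∏ k ∈ univ.erase i, lam F k (δ k)) • LinearMap.adjoint (F i (δ i)) (x i) := by
  have : (⟨⟨fun x => WithLp.toLp 2 (fun i => (∏ k ∈ univ.erase i, lam F k (δ k)) •
        LinearMap.adjoint (F i (δ i)) (x i)),
      fun x y => by ext i; simp [map_add, smul_add]⟩,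
      fun c x => by ext i; simp [map_smul, smul_comm c]⟩ :
        TensorSp n H →ₗ[ℂ] TensorSp n H) = LinearMap.adjoint (guardedComp F δ) := by
    rw [LinearMap.eq_adjoint_iff]
    intro x y
    simp only [LinearMap.coe_mk, AddHom.coe_mk, PiLp.inner_apply, guardedComp]
    refine Finset.sum_congr rfl fun j _ => ?_
    rw [← Complex.coe_smul, ← Complex.coe_smul, inner_smul_left, inner_smul_right,
      Complex.conj_ofReal, LinearMap.adjoint_inner_left]
  rw [← this]
  rfl

end aux

/-- idempotent law — if all `n` guarded families are the same full
family `{E_δ}` then, after tracing out the coin (initialized in any density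
operator `ρ`), the guarded composition acts on `σ` as `∑_δ E_δ σ E_δ†`. -/
theorem guardedComp_idempotent {n : ℕ} {H : Type*}
    [NormedAddCommGroup H] [InnerProductSpace ℂ H] [FiniteDimensional ℂ H]
    {Δ₀ : Type*} [Fintype Δ₀] (E₀ : Δ₀ → (H →ₗ[ℂ] H))
    (hfull : ∑ δ : Δ₀, LinearMap.adjoint (E₀ δ) ∘ₗ E₀ δ = LinearMap.id)
    (ρ : EuclideanSpace ℂ (Fin n) →ₗ[ℂ] EuclideanSpace ℂ (Fin n))
    (hρ : IsPosOp ρ) (hρtr : LinearMap.trace ℂ _ ρ = 1)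
    (σ : H →ₗ[ℂ] H) (hσ : IsPosOp σ) (hσtr : LinearMap.trace ℂ H σ = 1) :
    trCoin (∑ δ : (∀ _ : Fin n, Δ₀),
        guardedComp (fun _ d => E₀ d) δ ∘ₗ tensorOp ρ σ ∘ₗ
          LinearMap.adjoint (guardedComp (fun _ d => E₀ d) δ))
      = ∑ δ : Δ₀, E₀ δ ∘ₗ σ ∘ₗ LinearMap.adjoint (E₀ δ) := by

  classical
  -- abbreviations
  set F : ∀ _ : Fin n, Δ₀ → (H →ₗ[ℂ] H) := fun _ d => E₀ d with hF
  set t : Δ₀ → ℝ :=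
    fun τ => (LinearMap.trace ℂ H (LinearMap.adjoint (E₀ τ) ∘ₗ E₀ τ)).re with ht_def
  set T : ℝ := ∑ τ : Δ₀, t τ with hT_def
  set w : Δ₀ → ℝ := fun τ => t τ / T with hw_def
  -- H is nontrivial
  have hntH : Nontrivial H := by
    rcases subsingleton_or_nontrivial H with h | h
    · exfalso
      have : σ = 0 := Subsingleton.elim _ _
      rw [this, map_zero] at hσtr
      exact one_ne_zero hσtr.symm
    · exact h
  -- each t τ is nonnegative
  have ht : ∀ τ, 0 ≤ t τ := by
    intro τ
    have := trace_eq_sum_inner' (LinearMap.adjoint (E₀ τ) ∘ₗ E₀ τ)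
      (stdOrthonormalBasis ℂ H)
    rw [ht_def]
    simp only [this, Complex.re_sum]
    refine Finset.sum_nonneg fun i _ => ?_
    rw [LinearMap.comp_apply, LinearMap.adjoint_inner_right]
    simpa using inner_self_nonneg (𝕜 := ℂ) (x := (E₀ τ) ((stdOrthonormalBasis ℂ H) i))
  -- T equals the dimension of H, hence is positive
  have hT : T = (Module.finrank ℂ H : ℝ) := by
    have h1 : ∑ τ : Δ₀, LinearMap.trace ℂ H (LinearMap.adjoint (E₀ τ) ∘ₗ E₀ τ)
        = (Module.finrank ℂ H : ℂ) := by
      rw [← map_sum, hfull, LinearMap.trace_id]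
    have h2 := congrArg Complex.re h1
    simpa [hT_def, ht_def, Complex.re_sum] using h2
  have hTpos : 0 < T := by
    rw [hT]
    exact_mod_cast Module.finrank_pos
  have hw : ∑ τ, w τ = 1 := by
    rw [hw_def]
    rw [← Finset.sum_div, ← hT_def, div_self (ne_of_gt hTpos)]
  -- the squares of the lambda coefficients
  have hlam : ∀ (k : Fin n) (τ : Δ₀), lam F k τ * lam F k τ = w τ := by
    intro k τ
    have : lam F k τ = Real.sqrt (w τ) := rfl
    rw [this, Real.mul_self_sqrt (div_nonneg (ht τ) hTpos.le)]
  -- trace of ρ as sum of diagonal entries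
  have hρdiag : ∑ i : Fin n, ρ (EuclideanSpace.single i 1) i = 1 := by
    have htr : LinearMap.trace ℂ (EuclideanSpace ℂ (Fin n)) ρ
        = ∑ i : Fin n, ρ (EuclideanSpace.single i 1) i := by
      rw [LinearMap.trace_eq_matrix_trace ℂ
        (EuclideanSpace.basisFun (Fin n) ℂ).toBasis, Matrix.trace]
      refine Finset.sum_congr rfl fun i _ => ?_
      rw [Matrix.diag_apply, LinearMap.toMatrix_apply,
        OrthonormalBasis.coe_toBasis_repr_apply, OrthonormalBasis.coe_toBasis,
        EuclideanSpace.basisFun_repr, EuclideanSpace.basisFun_apply]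
    rw [← htr, hρtr]
  -- now compute both sides applied to an arbitrary vector
  apply LinearMap.ext; intro ψ
  -- the single composite term
  have hterm : ∀ (i : Fin n) (δ : Fin n → Δ₀),
      (guardedComp F δ ∘ₗ tensorOp ρ σ ∘ₗ LinearMap.adjoint (guardedComp F δ))
        (WithLp.toLp 2 (Pi.single i ψ)) i
      = ρ (EuclideanSpace.single i 1) i •
          ((∏ k ∈ univ.erase i, w (δ k)) •
            (E₀ (δ i) (σ (LinearMap.adjoint (E₀ (δ i)) ψ)))) := by
    intro i δ
    have hGA : ∀ b : Fin n,
        LinearMap.adjoint (guardedComp F δ) (WithLp.toLp 2 (Pi.single i ψ)) b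
          = if b = i then (∏ k ∈ univ.erase i, lam F k (δ k)) •
              LinearMap.adjoint (E₀ (δ i)) ψ else 0 := by
      intro b
      rw [guardedComp_adjoint_apply]
      by_cases hb : b = i
      · subst hb; simp; rfl
      · simp [hb, Pi.single_apply]
    rw [LinearMap.comp_apply, LinearMap.comp_apply]
    show (∏ k ∈ univ.erase i, lam F k (δ k)) •
        (E₀ (δ i)) ((tensorOp ρ σ) (LinearMap.adjoint (guardedComp F δ) (WithLp.toLp 2 (Pi.single i ψ))) i) = _
    have hM : (tensorOp ρ σ) (LinearMap.adjoint (guardedComp F δ) (WithLp.toLp 2 (Pi.single i ψ))) i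
        = ρ (EuclideanSpace.single i 1) i •
            σ ((∏ k ∈ univ.erase i, lam F k (δ k)) • LinearMap.adjoint (E₀ (δ i)) ψ) := by
      show (∑ b : Fin n, ρ (EuclideanSpace.single b 1) i •
          σ (LinearMap.adjoint (guardedComp F δ) (WithLp.toLp 2 (Pi.single i ψ)) b)) = _
      rw [Finset.sum_eq_single i]
      · rw [hGA i, if_pos rfl]
      · intro b _ hb
        rw [hGA b, if_neg hb, map_zero, smul_zero]
      · intro h; exact absurd (Finset.mem_univ i) h
    rw [hM]
    simp only [map_smul, LinearMap.map_smul_of_tower]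
    have hprod : (∏ k ∈ univ.erase i, lam F k (δ k)) * (∏ k ∈ univ.erase i, lam F k (δ k))
        = ∏ k ∈ univ.erase i, w (δ k) := by
      rw [← Finset.prod_mul_distrib]
      exact Finset.prod_congr rfl fun k _ => hlam k (δ k)
    rw [smul_comm, smul_smul, hprod]
  -- unfold the partial trace
  have hLHS : trCoin (∑ δ : (∀ _ : Fin n, Δ₀),
      guardedComp F δ ∘ₗ tensorOp ρ σ ∘ₗ LinearMap.adjoint (guardedComp F δ)) ψ
      = ∑ i : Fin n, ∑ δ : (∀ _ : Fin n, Δ₀),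
          (guardedComp F δ ∘ₗ tensorOp ρ σ ∘ₗ LinearMap.adjoint (guardedComp F δ))
            (WithLp.toLp 2 (Pi.single i ψ)) i := by
    rw [trCoin, LinearMap.sum_apply]
    refine Finset.sum_congr rfl fun i _ => ?_
    rw [LinearMap.comp_apply, LinearMap.comp_apply, LinearMap.sum_apply]
    show (∑ δ : (∀ _ : Fin n, Δ₀),
      (guardedComp F δ ∘ₗ tensorOp ρ σ ∘ₗ LinearMap.adjoint (guardedComp F δ))
        (WithLp.toLp 2 (Pi.single i ψ))) i = _
    rw [WithLp.ofLp_sum, Finset.sum_apply]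
  rw [hLHS]
  simp_rw [hterm]
  have hinner : ∀ i : Fin n,
      ∑ δ : (∀ _ : Fin n, Δ₀), ρ (EuclideanSpace.single i 1) i •
        ((∏ k ∈ univ.erase i, w (δ k)) •
          (E₀ (δ i) (σ (LinearMap.adjoint (E₀ (δ i)) ψ))))
      = ρ (EuclideanSpace.single i 1) i •
          ∑ d : Δ₀, E₀ d (σ (LinearMap.adjoint (E₀ d) ψ)) := by
    intro i
    rw [← Finset.smul_sum]
    congr 1
    exact key_sum w hw i (fun d => E₀ d (σ (LinearMap.adjoint (E₀ d) ψ)))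
  simp_rw [hinner]
  rw [← Finset.sum_smul, hρdiag, one_smul, LinearMap.sum_apply]
  exact Finset.sum_congr rfl fun d _ => rfl
end
end

section
/- Coin-rotation law for guarded composition of unitaries: for unitaries U on H_C and U_1,...,U_n on H, (guarded composition of U_i along the basis {U†|i⟩}) followed by U ⊗ I_H equals U ⊗ I_H followed by (guarded composition of U_i along {|i⟩}); i.e., (U ⊗ I_H)·Q' = Q·(U ⊗ I_H) where Q' is the guarded composition along {U†|i⟩} and Q along {|i⟩}. -/
noncomputable section
open scoped InnerProductSpace
open Finset

variable {n : ℕ} {H : Type*} [NormedAddCommGroup H] [InnerProductSpace ℂ H]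

lemma pilp_sum_apply {ι : Type*} {α : Fin n → Type*}
    [∀ i, NormedAddCommGroup (α i)] (s : Finset ι) (f : ι → PiLp 2 α) (j : Fin n) :
    (∑ i ∈ s, f i) j = ∑ i ∈ s, f i j := by
  classical
  induction s using Finset.induction with
  | empty => rfl
  | insert _ _ h ih => rw [Finset.sum_insert h, Finset.sum_insert h, ← ih]; rfl

lemma euclid_decomp (c : EuclideanSpace ℂ (Fin n)) :
    ∑ i, c i • EuclideanSpace.single i (1:ℂ) = c := by
  ext j
  rw [pilp_sum_apply]
  simp [EuclideanSpace.single_apply]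

lemma tensorLeft_pure (A : EuclideanSpace ℂ (Fin n) →ₗ[ℂ] EuclideanSpace ℂ (Fin n))
    (c : EuclideanSpace ℂ (Fin n)) (ψ : H) :
    tensorLeft A (pureTensor c ψ) = pureTensor (A c) ψ := by
  ext i
  have h : A c = ∑ b, c b • A (EuclideanSpace.single b 1) := by
    conv_lhs => rw [← euclid_decomp c]
    simp [map_sum]
  show ∑ b : Fin n, A (EuclideanSpace.single b 1) i • LinearMap.id (c b • ψ)
      = (A c) i • ψ
  rw [h, pilp_sum_apply, Finset.sum_smul]
  simp [smul_smul, mul_comm]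

lemma tensor_decomp (U : EuclideanSpace ℂ (Fin n) ≃ₗᵢ[ℂ] EuclideanSpace ℂ (Fin n))
    (x : TensorSp n H) :
    x = ∑ i, pureTensor (U.symm (EuclideanSpace.single i 1))
      (∑ j, (U (EuclideanSpace.single j 1)) i • x j) := by
  have key : ∀ j m, ∑ i, (U (EuclideanSpace.single j 1)) i *
      (U.symm (EuclideanSpace.single i 1)) m = (EuclideanSpace.single j (1:ℂ)) m := by
    intro j m
    have h : ∑ i, (U (EuclideanSpace.single j 1)) i • U.symm (EuclideanSpace.single i (1:ℂ))
        = EuclideanSpace.single j 1 := by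
      simp_rw [← map_smul U.symm, ← map_sum]
      rw [euclid_decomp]
      simp
    conv_rhs => rw [← h]
    rw [pilp_sum_apply]
    simp [smul_eq_mul]
  ext m
  show x m = (∑ i, pureTensor (U.symm (EuclideanSpace.single i 1))
      (∑ j, (U (EuclideanSpace.single j 1)) i • x j)) m
  rw [pilp_sum_apply]
  simp only [pureTensor]
  calc x m = ∑ j, (EuclideanSpace.single j (1:ℂ)) m • x j := by
        simp [EuclideanSpace.single_apply]
    _ = ∑ j, (∑ i, (U (EuclideanSpace.single j 1)) i *
          (U.symm (EuclideanSpace.single i 1)) m) • x j := by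
        simp_rw [key]
    _ = ∑ j, ∑ i, ((U (EuclideanSpace.single j 1)) i *
          (U.symm (EuclideanSpace.single i 1)) m) • x j := by
        simp [Finset.sum_smul]
    _ = ∑ i, ∑ j, ((U (EuclideanSpace.single j 1)) i *
          (U.symm (EuclideanSpace.single i 1)) m) • x j := Finset.sum_comm
    _ = ∑ i, (U.symm (EuclideanSpace.single i 1)) m •
          ∑ j, (U (EuclideanSpace.single j 1)) i • x j := by
        simp [Finset.smul_sum, smul_smul, mul_comm]

/-- coin-rotation law — if `Q'` is the guarded composition of the `Uᵢ`
along the rotated basis `{U†|i⟩}` (characterized by its action on pure tensors) and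
`Q` the one along `{|i⟩}`, then `(U ⊗ I)·Q' = Q·(U ⊗ I)`. -/
theorem guardedComp_coin_rotation {n : ℕ} {H : Type*} [NormedAddCommGroup H]
    [InnerProductSpace ℂ H] [FiniteDimensional ℂ H]
    (U : EuclideanSpace ℂ (Fin n) ≃ₗᵢ[ℂ] EuclideanSpace ℂ (Fin n))
    (Us : Fin n → (H →ₗ[ℂ] H)) (hUs : ∀ i, IsUnitaryOp (Us i))
    (Q' : TensorSp n H →ₗ[ℂ] TensorSp n H)
    (hQ' : ∀ (i : Fin n) (ψ : H),
      Q' (pureTensor (U.symm (EuclideanSpace.single i 1)) ψ)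
        = pureTensor (U.symm (EuclideanSpace.single i 1)) (Us i ψ)) :
    tensorLeft U.toLinearEquiv.toLinearMap ∘ₗ Q'
      = blockDiag Us ∘ₗ tensorLeft U.toLinearEquiv.toLinearMap := by
  refine LinearMap.ext fun x => ?_
  set A := U.toLinearEquiv.toLinearMap with hA
  have lhs_eq : tensorLeft A (Q' x)
      = ∑ i, pureTensor (EuclideanSpace.single i 1)
          (Us i (∑ j, (U (EuclideanSpace.single j 1)) i • x j)) := by
    conv_lhs => rw [tensor_decomp U x]
    rw [map_sum, map_sum]
    refine Finset.sum_congr rfl fun i _ => ?_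
    rw [hQ', tensorLeft_pure]
    have hAi : A (U.symm (EuclideanSpace.single i 1)) = EuclideanSpace.single i 1 := by
      show U (U.symm (EuclideanSpace.single i 1)) = _
      simp
    rw [hAi]
  show tensorLeft A (Q' x) = blockDiag Us (tensorLeft A x)
  rw [lhs_eq]
  ext m
  rw [pilp_sum_apply]
  show _ = Us m ((tensorLeft A x) m)
  have h2 : (tensorLeft A x) m = ∑ j, (U (EuclideanSpace.single j 1)) m • x j := rfl
  rw [h2]
  simp [pureTensor, EuclideanSpace.single_apply]
end
end
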